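/- Let g : [0,∞) → [0,∞) be bounded, non-increasing and integrable. Then for every signed Borel measure ν on [0,∞) one has |∫₀^∞ g dν| ≤ C · sup_{x ≥ 0} |ν|([x, x+1]), with C := g(0) + ∫₀^∞ g. -/

import Mathlib

open MeasureTheory Set Filter
open scoped ENNReal Topology
set_option maxHeartbeats 1000000

lemma stmt13_aux (g : ℝ → ℝ) (hg0 : ∀ x ∈ Ici (0 : ℝ), 0 ≤ g x)
    (hgmono : AntitoneOn g (Ici (0 : ℝ)))
    (μ : Measure ℝ) (hμ : μ (Iio (0 : ℝ)) = 0) :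
    ∫⁻ x, ‖g x‖₊ ∂μ ≤ ∑' n : ℕ, ENNReal.ofReal (g n) * μ (Icc (n : ℝ) (n + 1)) := by
  have h1 : ∫⁻ x, ‖g x‖₊ ∂μ = ∫⁻ x in Ici (0:ℝ), ‖g x‖₊ ∂μ := by
    rw [← lintegral_add_compl (fun x => (‖g x‖₊ : ℝ≥0∞)) measurableSet_Ici (μ := μ),
      compl_Ici, setLIntegral_measure_zero _ _ hμ, add_zero]
  rw [h1]
  have hsub : Ici (0:ℝ) ⊆ ⋃ n : ℕ, Ico (n : ℝ) (n + 1) := by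
    intro x hx
    exact mem_iUnion.2 ⟨⌊x⌋₊, Nat.floor_le hx, Nat.lt_floor_add_one x⟩
  calc ∫⁻ x in Ici (0:ℝ), ‖g x‖₊ ∂μ
      ≤ ∫⁻ x in ⋃ n : ℕ, Ico (n : ℝ) (n + 1), ‖g x‖₊ ∂μ := lintegral_mono_set hsub
    _ ≤ ∑' n : ℕ, ∫⁻ x in Ico (n : ℝ) (n + 1), ‖g x‖₊ ∂μ := lintegral_iUnion_le _ _
    _ ≤ ∑' n : ℕ, ENNReal.ofReal (g n) * μ (Icc (n : ℝ) (n + 1)) := by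
        refine ENNReal.tsum_le_tsum fun n => ?_
        have hle : ∫⁻ x in Ico (n : ℝ) (n + 1), ‖g x‖₊ ∂μ ≤
            ∫⁻ _ in Ico (n : ℝ) (n + 1), ENNReal.ofReal (g n) ∂μ := by
          refine setLIntegral_mono' measurableSet_Ico fun x hx => ?_
          have hxn : (n : ℝ) ≤ x := hx.1
          have hx0 : (0:ℝ) ≤ x := le_trans (Nat.cast_nonneg n) hxn
          have hgx : g x ≤ g n := hgmono (mem_Ici.2 (Nat.cast_nonneg n)) (mem_Ici.2 hx0) hxn
          rw [← enorm_eq_nnnorm, ← ofReal_norm_eq_enorm, Real.norm_eq_abs,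
            abs_of_nonneg (hg0 x hx0)]
          exact ENNReal.ofReal_le_ofReal hgx
        calc ∫⁻ x in Ico (n : ℝ) (n + 1), ‖g x‖₊ ∂μ
            ≤ ENNReal.ofReal (g n) * μ (Ico (n : ℝ) (n + 1)) := by
              simpa [setLIntegral_const] using hle
          _ ≤ ENNReal.ofReal (g n) * μ (Icc (n : ℝ) (n + 1)) :=
              by gcongr; exact Ico_subset_Icc_self

lemma stmt13_sum (g : ℝ → ℝ) (hg0 : ∀ x ∈ Ici (0 : ℝ), 0 ≤ g x)
    (hgmono : AntitoneOn g (Ici (0 : ℝ)))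
    (hgint : IntegrableOn g (Ioi (0 : ℝ))) :
    ∑' n : ℕ, ENNReal.ofReal (g n) ≤
      ENNReal.ofReal (g 0 + ∫ x in Ioi (0 : ℝ), g x) := by
  have hU : (⋃ n : ℕ, Ioc (n : ℝ) (n + 1)) = Ioi 0 := by
    ext x
    simp only [mem_iUnion, mem_Ioc, mem_Ioi]
    constructor
    · rintro ⟨n, hn, -⟩
      exact lt_of_le_of_lt (Nat.cast_nonneg n) hn
    · intro hx
      rcases Nat.exists_eq_add_of_lt (Nat.ceil_pos.2 hx) with ⟨n, hn⟩
      refine ⟨⌈x⌉₊ - 1, ?_, ?_⟩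
      · have h1 : (⌈x⌉₊ : ℝ) - 1 < x := by
          have := Nat.ceil_lt_add_one (le_of_lt hx)
          linarith
        have : ((⌈x⌉₊ - 1 : ℕ) : ℝ) = (⌈x⌉₊ : ℝ) - 1 := by
          have h0 : 1 ≤ ⌈x⌉₊ := Nat.one_le_ceil_iff.2 hx
          push_cast [h0]; ring
        linarith [this ▸ h1]
      · have h0 : 1 ≤ ⌈x⌉₊ := Nat.one_le_ceil_iff.2 hx
        have : ((⌈x⌉₊ - 1 : ℕ) : ℝ) + 1 = (⌈x⌉₊ : ℝ) := by push_cast [h0]; ring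
        rw [this]
        exact Nat.le_ceil x
  have hdisj : Pairwise (Function.onFun Disjoint fun n : ℕ => Ioc (n : ℝ) (n + 1)) := by
    intro m n hmn
    rcases hmn.lt_or_gt with h | h
    · refine Set.Ioc_disjoint_Ioc.2 ?_
      have h' : (m:ℝ) + 1 ≤ n := by exact_mod_cast h
      exact le_trans (min_le_left _ _) (le_trans h' (le_max_right _ _))
    · refine Set.Ioc_disjoint_Ioc.2 ?_
      have h' : (n:ℝ) + 1 ≤ m := by exact_mod_cast h
      exact le_trans (min_le_right _ _) (le_trans h' (le_max_left _ _))
  have key : ∑' n : ℕ, ENNReal.ofReal (g ((n : ℝ) + 1)) ≤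
      ∫⁻ x in Ioi (0:ℝ), ENNReal.ofReal (g x) := by
    rw [← hU, lintegral_iUnion (fun n => measurableSet_Ioc) hdisj]
    refine ENNReal.tsum_le_tsum fun n => ?_
    have : ENNReal.ofReal (g ((n:ℝ) + 1)) * volume (Ioc (n:ℝ) (n+1)) ≤
        ∫⁻ x in Ioc (n : ℝ) (n + 1), ENNReal.ofReal (g x) := by
      rw [← setLIntegral_const]
      refine setLIntegral_mono' measurableSet_Ioc fun x hx => ?_
      have hx0 : (0:ℝ) ≤ x := le_of_lt (lt_of_le_of_lt (Nat.cast_nonneg n) hx.1)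
      exact ENNReal.ofReal_le_ofReal
        (hgmono hx0 (mem_Ici.2 (by positivity)) hx.2)
    have hv : volume (Ioc (n:ℝ) (n+1)) = 1 := by
      rw [Real.volume_Ioc]; norm_num
    rw [hv, mul_one] at this; exact this
  have hnn : 0 ≤ᵐ[volume.restrict (Ioi (0:ℝ))] g :=
    ae_restrict_of_forall_mem measurableSet_Ioi fun x hx => hg0 x (mem_Ici.2 (le_of_lt hx))
  have hlint : ∫⁻ x in Ioi (0:ℝ), ENNReal.ofReal (g x) =
      ENNReal.ofReal (∫ x in Ioi (0:ℝ), g x) :=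
    (ofReal_integral_eq_lintegral_ofReal hgint hnn).symm
  have hsplit : ∑' n : ℕ, ENNReal.ofReal (g n) =
      ENNReal.ofReal (g 0) + ∑' n : ℕ, ENNReal.ofReal (g ((n:ℝ) + 1)) := by
    rw [tsum_eq_zero_add' ENNReal.summable]
    norm_num [Nat.cast_add]
  rw [hsplit, ENNReal.ofReal_add (hg0 0 (mem_Ici.2 le_rfl))
    (integral_nonneg_of_ae (ae_restrict_of_forall_mem measurableSet_Ioi
      fun x hx => hg0 x (le_of_lt hx)))]
  gcongr; exact key.trans_eq hlint


/-- for `g : [0,∞) → [0,∞)` bounded, non-increasing and integrable,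
`|∫₀^∞ g dν| ≤ (g(0) + ∫₀^∞ g) · sup_{x ≥ 0} |ν|([x,x+1])` for every signed Borel
measure `ν` on `[0,∞)`.  A (possibly infinite) signed measure `ν` is represented
as a difference `P − N` of non-negative measures supported on `[0,∞)`, so that
`∫ g dν = ∫ g dP − ∫ g dN` and `|ν| ≤ P + N`; the inequality is stated in `[0,∞]`. -/
theorem stmt13 (g : ℝ → ℝ) (hg0 : ∀ x ∈ Ici (0 : ℝ), 0 ≤ g x)
    (hgmono : AntitoneOn g (Ici (0 : ℝ)))
    (hgint : IntegrableOn g (Ioi (0 : ℝ))) :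
    ∀ P N : Measure ℝ, P (Iio (0 : ℝ)) = 0 → N (Iio (0 : ℝ)) = 0 →
      ENNReal.ofReal |(∫ x, g x ∂P) - ∫ x, g x ∂N| ≤
        ENNReal.ofReal (g 0 + ∫ x in Ioi (0 : ℝ), g x) *
          ⨆ x ∈ Ici (0 : ℝ), (P (Icc x (x + 1)) + N (Icc x (x + 1))) := by
  intro P N hP hN
  set M := ⨆ x ∈ Ici (0 : ℝ), (P (Icc x (x + 1)) + N (Icc x (x + 1))) with hM
  have hMn : ∀ n : ℕ, P (Icc (n:ℝ) (n+1)) + N (Icc (n:ℝ) (n+1)) ≤ M :=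
    fun n => by
    have := le_iSup₂ (f := fun (x : ℝ) (_ : x ∈ Ici (0:ℝ)) =>
      P (Icc x (x + 1)) + N (Icc x (x + 1))) (n:ℝ) (mem_Ici.2 (Nat.cast_nonneg n))
    simpa [hM] using this
  calc ENNReal.ofReal |(∫ x, g x ∂P) - ∫ x, g x ∂N|
      ≤ ENNReal.ofReal |∫ x, g x ∂P| + ENNReal.ofReal |∫ x, g x ∂N| := by
        refine le_trans (ENNReal.ofReal_le_ofReal (abs_sub _ _)) ?_
        exact ENNReal.ofReal_add_le
    _ ≤ (∫⁻ x, ‖g x‖₊ ∂P) + ∫⁻ x, ‖g x‖₊ ∂N := by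
        gcongr <;>
          simpa [← Real.enorm_eq_ofReal_abs, enorm_eq_nnnorm] using
            enorm_integral_le_lintegral_enorm (μ := _) (f := g)
    _ ≤ (∑' n : ℕ, ENNReal.ofReal (g n) * P (Icc (n:ℝ) (n+1))) +
        ∑' n : ℕ, ENNReal.ofReal (g n) * N (Icc (n:ℝ) (n+1)) :=
        add_le_add (stmt13_aux g hg0 hgmono P hP) (stmt13_aux g hg0 hgmono N hN)
    _ = ∑' n : ℕ, ENNReal.ofReal (g n) * (P (Icc (n:ℝ) (n+1)) + N (Icc (n:ℝ) (n+1))) := by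
        rw [← ENNReal.tsum_add]
        exact tsum_congr fun n => (mul_add _ _ _).symm
    _ ≤ ∑' n : ℕ, ENNReal.ofReal (g n) * M :=
        ENNReal.tsum_le_tsum fun n => by gcongr; exact hMn n
    _ = (∑' n : ℕ, ENNReal.ofReal (g n)) * M := ENNReal.tsum_mul_right
    _ ≤ ENNReal.ofReal (g 0 + ∫ x in Ioi (0 : ℝ), g x) * M :=
        by gcongr; exact stmt13_sum g hg0 hgmono hgint
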